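/- Let (H, Γ) be a solution of the gravity–diffusion traveling wave system H' = f₁(H, Γ), Γ' = f₂(H, Γ) on [0, ξ_ω) with H(ξ) ∈ (H*, 2H*) and Γ(ξ) ∈ (0,1) for all ξ. If there is μ > 0 with ΓH + 4Dϱ(Γ) ≥ μ on the trajectory, then Γ'(ξ) ≥ −(4R_ϱ/μ)Γ(ξ), hence Γ(ξ) ≥ Γ(0)·exp(−4R_ϱ ξ/μ) for all ξ ∈ [0, ξ_ω). In particular Γ cannot reach 0 in finite time. -/
import Mathlib


open Set

/-- Along a trajectory of the gravity–diffusion system with uniformly positive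
denominator, Γ satisfies Γ' ≥ −(4R_ϱ/μ)Γ and hence an exponential lower bound,
so it cannot reach zero in finite time. -/
theorem stmt_16 (G D Hstar Rϱ μ ξω : ℝ)
    (hG : 0 < G) (hD : 0 < D) (hHstar : 0 < Hstar) (hμ : 0 < μ) (hξω : 0 < ξω)
    (ϱ : ℝ → ℝ) (hϱnonneg : ∀ z ∈ Icc (0:ℝ) 1, 0 ≤ ϱ z)
    (hRϱ : ∀ z ∈ Icc (0:ℝ) 1, ϱ z ≤ Rϱ)
    (H Γ : ℝ → ℝ)
    (hHrange : ∀ ξ ∈ Ico (0:ℝ) ξω, H ξ ∈ Ioo Hstar (2 * Hstar))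
    (hΓrange : ∀ ξ ∈ Ico (0:ℝ) ξω, Γ ξ ∈ Ioo (0:ℝ) 1)
    (hHd : ∀ ξ ∈ Ico (0:ℝ) ξω,
      HasDerivAt H ((6 * Γ ξ * H ξ * (2 * Hstar - H ξ)
          - 12 * D * (H ξ - Hstar) * ϱ (Γ ξ))
        / (G * (H ξ)^3 * (Γ ξ * H ξ + 4 * D * ϱ (Γ ξ)))) ξ)
    (hΓd : ∀ ξ ∈ Ico (0:ℝ) ξω,
      HasDerivAt Γ (2 * Γ ξ * (H ξ - 3 * Hstar) * ϱ (Γ ξ)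
        / (H ξ * (Γ ξ * H ξ + 4 * D * ϱ (Γ ξ)))) ξ)
    (hμbound : ∀ ξ ∈ Ico (0:ℝ) ξω, μ ≤ Γ ξ * H ξ + 4 * D * ϱ (Γ ξ)) :
    (∀ ξ ∈ Ico (0:ℝ) ξω, -(4 * Rϱ / μ) * Γ ξ ≤ deriv Γ ξ) ∧
      (∀ ξ ∈ Ico (0:ℝ) ξω, Γ 0 * Real.exp (-(4 * Rϱ * ξ) / μ) ≤ Γ ξ) ∧
      (∀ ξ ∈ Ico (0:ℝ) ξω, 0 < Γ ξ) := by
  have h0mem : (0:ℝ) ∈ Ico (0:ℝ) ξω := ⟨le_refl 0, hξω⟩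
  have hRnonneg : 0 ≤ Rϱ := by
    have h1 := hΓrange 0 h0mem
    have hmem : Γ 0 ∈ Icc (0:ℝ) 1 := ⟨h1.1.le, h1.2.le⟩
    exact le_trans (hϱnonneg _ hmem) (hRϱ _ hmem)
  -- first part
  have key : ∀ ξ ∈ Ico (0:ℝ) ξω, -(4 * Rϱ / μ) * Γ ξ ≤ deriv Γ ξ := by
    intro ξ hξ
    have hH := hHrange ξ hξ
    have hΓ := hΓrange ξ hξ
    have hmem : Γ ξ ∈ Icc (0:ℝ) 1 := ⟨hΓ.1.le, hΓ.2.le⟩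
    have hr0 : 0 ≤ ϱ (Γ ξ) := hϱnonneg _ hmem
    have hrR : ϱ (Γ ξ) ≤ Rϱ := hRϱ _ hmem
    have hden : μ ≤ Γ ξ * H ξ + 4 * D * ϱ (Γ ξ) := hμbound ξ hξ
    have hdenpos : 0 < Γ ξ * H ξ + 4 * D * ϱ (Γ ξ) := lt_of_lt_of_le hμ hden
    have hHpos : 0 < H ξ := lt_trans hHstar hH.1
    have hpos : 0 < H ξ * (Γ ξ * H ξ + 4 * D * ϱ (Γ ξ)) := mul_pos hHpos hdenpos
    rw [(hΓd ξ hξ).deriv, le_div_iff₀ hpos]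
    rw [show -(4 * Rϱ / μ) * Γ ξ * (H ξ * (Γ ξ * H ξ + 4 * D * ϱ (Γ ξ)))
        = -(4 * Rϱ * Γ ξ * (H ξ * (Γ ξ * H ξ + 4 * D * ϱ (Γ ξ)))) / μ by
      field_simp]
    rw [div_le_iff₀ hμ]
    nlinarith [mul_nonneg (mul_nonneg hΓ.1.le hr0) (sub_nonneg.2 hH.1.le),
      mul_nonneg (mul_nonneg (mul_nonneg hΓ.1.le hr0) hHstar.le) (sub_nonneg.2 hden),
      mul_nonneg (mul_nonneg (mul_nonneg hΓ.1.le hHpos.le) (sub_nonneg.2 hrR)) hμ.le,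
      mul_nonneg (mul_nonneg (mul_nonneg hΓ.1.le hr0) hμ.le) (sub_nonneg.2 hH.1.le),
      mul_nonneg (mul_nonneg (mul_nonneg hΓ.1.le hHpos.le) hRnonneg) (sub_nonneg.2 hden)]
  refine ⟨key, ?_, fun ξ hξ => (hΓrange ξ hξ).1⟩
  set c : ℝ := 4 * Rϱ / μ with hc
  have hmono : MonotoneOn (fun x => Γ x * Real.exp (c * x)) (Ico 0 ξω) := by
    have hder : ∀ x ∈ Ico (0:ℝ) ξω, HasDerivAt (fun x => Γ x * Real.exp (c * x))
        (deriv Γ x * Real.exp (c * x) + Γ x * (Real.exp (c * x) * c)) x := by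
      intro x hx
      have h1 : HasDerivAt Γ (deriv Γ x) x := ((hΓd x hx).deriv ▸ hΓd x hx)
      have h2 : HasDerivAt (fun x : ℝ => c * x) c x := by
        simpa using (hasDerivAt_id x).const_mul c
      exact h1.mul h2.exp
    apply monotoneOn_of_deriv_nonneg (convex_Ico 0 ξω)
    · exact fun x hx => ((hder x hx).continuousAt).continuousWithinAt
    · intro x hx
      rw [interior_Ico] at hx
      exact ((hder x ⟨hx.1.le, hx.2⟩).differentiableAt).differentiableWithinAt
    · intro x hx
      rw [interior_Ico] at hx
      have hx' : x ∈ Ico (0:ℝ) ξω := ⟨hx.1.le, hx.2⟩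
      rw [(hder x hx').deriv]
      have hk := key x hx'
      have hE := Real.exp_pos (c * x)
      have hΓx := (hΓrange x hx').1
      nlinarith
  intro ξ hξ
  have h := hmono h0mem hξ hξ.1
  simp only [mul_zero, Real.exp_zero, mul_one] at h
  have heq : -(4 * Rϱ * ξ) / μ = -(c * ξ) := by rw [hc]; field_simp
  rw [heq, Real.exp_neg]
  rw [mul_inv_le_iff₀ (Real.exp_pos _)]
  linarith [h]
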